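/- With μ_n(ψ) as defined for the arc transform with fixed half-length ψ ∈ [0, π], for odd n = 2m-1 one has lim_{m→∞} ((4m-1)/4) μ_{2m-1}(ψ)² = 4πψ for ψ ∈ [0, π/2] and = 4π² - 4πψ for ψ ∈ [π/2, π], with uniform convergence in ψ. -/

import Mathlib

open Real Finset Filter

/-- The square `|P̃_n^j(0)|²` of the normalized associated Legendre function at zero,
for integer order `j` with `|j| ≤ n`. -/
noncomputable def ptildeSqZ (n : ℕ) (j : ℤ) : ℝ :=
  if Even ((n : ℤ) + j) then
    (2 * n + 1) / (4 * Real.pi) *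
      ((Nat.doubleFactorial (n - j.natAbs - 1) * Nat.doubleFactorial (n + j.natAbs - 1) : ℝ) /
        (Nat.doubleFactorial (n - j.natAbs) * Nat.doubleFactorial (n + j.natAbs) : ℝ))
  else 0

/-- The function `s_j(ψ)`: `2ψ` for `j = 0` and `2 sin(jψ)/j` otherwise. -/
noncomputable def sArc (j : ℤ) (ψ : ℝ) : ℝ :=
  if j = 0 then 2 * ψ else 2 * Real.sin (j * ψ) / j

/-- The squared singular values `μ_n(ψ)²` of the arc transform with fixed half-length `ψ`. -/
noncomputable def muSq (n : ℕ) (ψ : ℝ) : ℝ :=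
  8 * Real.pi ^ 2 / (2 * n + 1) *
    ∑ j ∈ Finset.Icc (-(n : ℤ)) (n : ℤ), ptildeSqZ n j * sArc j ψ ^ 2

set_option maxHeartbeats 1000000

open Topology

namespace MuAux

/-- Wallis ratio `(2n-1)!! / (2n)!!`. -/
noncomputable def w (n : ℕ) : ℝ :=
  (Nat.doubleFactorial (2 * n - 1) : ℝ) / (Nat.doubleFactorial (2 * n) : ℝ)

lemma w_pos (n : ℕ) : 0 < w n := by
  apply div_pos <;> exact_mod_cast Nat.doubleFactorial_pos _

lemma w_zero : w 0 = 1 := by simp [w, Nat.doubleFactorial]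

lemma dF_odd (n : ℕ) :
    (Nat.doubleFactorial (2 * n + 1) : ℝ) = (2 * n + 1) * Nat.doubleFactorial (2 * n - 1) := by
  cases n with
  | zero => simp [Nat.doubleFactorial]
  | succ m =>
    have : 2 * (m + 1) + 1 = (2 * m + 1) + 2 := by ring
    rw [this, Nat.doubleFactorial]
    push_cast
    have : 2 * (m + 1) - 1 = 2 * m + 1 := by omega
    rw [this]; ring

lemma dF_even (n : ℕ) :
    (Nat.doubleFactorial (2 * (n + 1)) : ℝ) = (2 * n + 2) * Nat.doubleFactorial (2 * n) := by
  have : 2 * (n + 1) = 2 * n + 2 := by ring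
  rw [this, Nat.doubleFactorial]; push_cast; ring

lemma w_succ (n : ℕ) : w (n + 1) = w n * ((2 * n + 1) / (2 * n + 2)) := by
  have h1 : 2 * (n + 1) - 1 = 2 * n + 1 := by omega
  have hd : (0:ℝ) < (Nat.doubleFactorial (2 * n) : ℝ) := by
    exact_mod_cast Nat.doubleFactorial_pos _
  rw [w, w, h1, dF_odd, dF_even]
  field_simp

lemma wallis_key (n : ℕ) : (2 * (n:ℝ) + 1) * w n ^ 2 * Real.Wallis.W n = 1 := by
  induction n with
  | zero => simp [w_zero, Real.Wallis.W]
  | succ m ih =>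
    rw [w_succ, Real.Wallis.W_succ]
    have h1 : (2 * (m:ℝ) + 1) ≠ 0 := by positivity
    have h2 : (2 * (m:ℝ) + 2) ≠ 0 := by positivity
    have h3 : (2 * (m:ℝ) + 3) ≠ 0 := by positivity
    push_cast
    field_simp
    linear_combination (2*(m:ℝ)+3)*ih

lemma wallis_lower (n : ℕ) : 2 / π ≤ (2 * (n:ℝ) + 1) * w n ^ 2 := by
  have hW := Real.Wallis.W_le n
  have hWpos := Real.Wallis.W_pos n
  have key := wallis_key n
  rw [div_le_iff₀ pi_pos]
  calc 2 = 2 * ((2 * (n:ℝ) + 1) * w n ^ 2 * Real.Wallis.W n) := by rw [key]; ring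
    _ ≤ (2 * (n:ℝ) + 1) * w n ^ 2 * π := by
        have hw : (0:ℝ) ≤ (2 * (n:ℝ) + 1) * w n ^ 2 := by positivity
        nlinarith

lemma wallis_upper (n : ℕ) : (2 * (n:ℝ) + 1) * w n ^ 2 ≤ 2 * (2 * n + 2) / (π * (2 * n + 1)) := by
  have hW := Real.Wallis.le_W n
  have hWpos := Real.Wallis.W_pos n
  have key := wallis_key n
  have h1 : (0:ℝ) < 2 * (n:ℝ) + 1 := by positivity
  have h2 : (0:ℝ) < 2 * (n:ℝ) + 2 := by positivity
  rw [div_mul_eq_mul_div, div_le_iff₀ h2] at hW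
  rw [le_div_iff₀ (by positivity)]
  nlinarith [mul_le_mul_of_nonneg_left hW (show (0:ℝ) ≤ (2 * (n:ℝ) + 1) * w n ^ 2 by positivity)]

lemma w_sq_ge (n : ℕ) : 1 / (π * ((n:ℝ) + 1/2)) ≤ w n ^ 2 := by
  have h := wallis_lower n
  have h1 : (0:ℝ) < 2 * (n:ℝ) + 1 := by positivity
  rw [div_le_iff₀ (by positivity)]
  rw [div_le_iff₀ pi_pos] at h
  nlinarith

lemma w_sq_le (n : ℕ) (hn : 1 ≤ n) : w n ^ 2 ≤ 1 / (π * n) := by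
  have h := wallis_upper n
  have h1 : (0:ℝ) < 2 * (n:ℝ) + 1 := by positivity
  have h2 : (1:ℝ) ≤ (n:ℝ) := by exact_mod_cast hn
  rw [le_div_iff₀ (by positivity)] at h
  rw [le_div_iff₀ (by positivity)]
  nlinarith [mul_le_mul_of_nonneg_left h (show (0:ℝ) ≤ (n:ℝ) by positivity),
    sq_nonneg (2*(n:ℝ)+1), pi_pos, sq_nonneg (w n)]

end MuAux

namespace MuAux2
open MuAux

/-- The normalized coefficient. -/
noncomputable def c (m k : ℕ) : ℝ := π * (4 * (m:ℝ) - 1) / 4 * (w (m - 1 - k) * w (m + k))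

lemma c_nonneg {m : ℕ} (hm : 1 ≤ m) (k : ℕ) : 0 ≤ c m k := by
  have : (1:ℝ) ≤ (m:ℝ) := by exact_mod_cast hm
  have h1 : (0:ℝ) ≤ 4 * (m:ℝ) - 1 := by linarith
  have := w_pos (m - 1 - k)
  have := w_pos (m + k)
  unfold c
  positivity

lemma c_sq_le {m k : ℕ} (hm : 1 ≤ m) (hk : k < m) : c m k ^ 2 ≤ 4 * ((k:ℝ) + 2) := by
  have hm' : (1:ℝ) ≤ (m:ℝ) := by exact_mod_cast hm
  rcases lt_or_eq_of_le (Nat.succ_le_of_lt hk) with hk2 | hk2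
  · -- k + 1 < m
    have ha : 1 ≤ m - 1 - k := by omega
    have hca : ((m - 1 - k : ℕ) : ℝ) = (m:ℝ) - 1 - (k:ℝ) := by
      have : m - 1 - k = m - (1 + k) := by omega
      rw [this, Nat.cast_sub (by omega)]; push_cast; ring
    have hwa := w_sq_le (m - 1 - k) ha
    have hwb := w_sq_le (m + k) (by omega)
    have hcb : ((m + k : ℕ) : ℝ) = (m:ℝ) + (k:ℝ) := by push_cast; ring
    rw [hca] at hwa
    rw [hcb] at hwb
    have hk2' : (k:ℝ) + 1 < (m:ℝ) := by exact_mod_cast hk2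
    have hpa : (0:ℝ) < (m:ℝ) - 1 - (k:ℝ) := by linarith
    have hpb : (0:ℝ) < (m:ℝ) + (k:ℝ) := by positivity
    have key : c m k ^ 2 ≤ (π * (4 * (m:ℝ) - 1) / 4) ^ 2 *
        (1 / (π * ((m:ℝ) - 1 - k)) * (1 / (π * ((m:ℝ) + k)))) := by
      have e : c m k ^ 2 = (π * (4 * (m:ℝ) - 1) / 4) ^ 2 *
          (w (m - 1 - k) ^ 2 * w (m + k) ^ 2) := by unfold c; ring
      rw [e]
      apply mul_le_mul_of_nonneg_left _ (by positivity)
      exact mul_le_mul hwa hwb (sq_nonneg _) (by positivity)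
    have e2 : (π * (4 * (m:ℝ) - 1) / 4) ^ 2 *
        (1 / (π * ((m:ℝ) - 1 - k)) * (1 / (π * ((m:ℝ) + k)))) =
        (4 * (m:ℝ) - 1) ^ 2 / (16 * ((m:ℝ) - 1 - k) * ((m:ℝ) + k)) := by
      field_simp; ring
    rw [e2] at key
    refine key.trans ?_
    rw [div_le_iff₀ (by positivity)]
    have hk3 : (k:ℝ) + 2 ≤ (m:ℝ) := by exact_mod_cast hk2
    have hkn : (0:ℝ) ≤ (k:ℝ) := by positivity
    have hstep : (m:ℝ) ≤ 4*((k:ℝ)+2)*((m:ℝ)-1-k) := by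
      nlinarith [mul_nonneg hkn (show (0:ℝ) ≤ (m:ℝ)-(k:ℝ)-2 by linarith)]
    calc (4*(m:ℝ)-1)^2 ≤ 16*(m:ℝ)^2 := by nlinarith
      _ ≤ 16*(m:ℝ)*(4*((k:ℝ)+2)*((m:ℝ)-1-(k:ℝ))) := by
          nlinarith [mul_le_mul_of_nonneg_left hstep (show (0:ℝ) ≤ 16*(m:ℝ) by positivity)]
      _ ≤ 4*((k:ℝ)+2) * (16*((m:ℝ)-1-(k:ℝ))*((m:ℝ)+(k:ℝ))) := by
          nlinarith [mul_nonneg (mul_nonneg (show (0:ℝ) ≤ 64*((k:ℝ)+2) by positivity)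
            (show (0:ℝ) ≤ (m:ℝ)-1-(k:ℝ) by linarith)) hkn]
  · -- k + 1 = m
    have ha : m - 1 - k = 0 := by omega
    have hb : m + k = 2 * m - 1 := by omega
    have hwb := w_sq_le (2 * m - 1) (by omega)
    have hcb : ((2 * m - 1 : ℕ) : ℝ) = 2 * (m:ℝ) - 1 := by
      rw [Nat.cast_sub (by omega)]; push_cast; ring
    rw [hcb] at hwb
    have e : c m k ^ 2 = (π * (4 * (m:ℝ) - 1) / 4) ^ 2 * w (2 * m - 1) ^ 2 := by
      unfold c; rw [ha, hb, w_zero]; ring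
    have hpb : (0:ℝ) < 2 * (m:ℝ) - 1 := by linarith
    have key : c m k ^ 2 ≤ (π * (4 * (m:ℝ) - 1) / 4) ^ 2 * (1 / (π * (2 * (m:ℝ) - 1))) := by
      rw [e]; exact mul_le_mul_of_nonneg_left hwb (by positivity)
    have e2 : (π * (4 * (m:ℝ) - 1) / 4) ^ 2 * (1 / (π * (2 * (m:ℝ) - 1))) =
        π * (4 * (m:ℝ) - 1) ^ 2 / (16 * (2 * (m:ℝ) - 1)) := by
      field_simp [pi_ne_zero, hpb.ne']; ring
    rw [e2] at key
    refine key.trans ?_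
    rw [div_le_iff₀ (by positivity)]
    have hkm : (k:ℝ) = (m:ℝ) - 1 := by
      have : k + 1 = m := hk2
      have := congrArg (fun x : ℕ => (x:ℝ)) this
      push_cast at this; linarith
    rw [hkm]
    nlinarith [Real.pi_le_four, hm']

lemma c_le {m k : ℕ} (hm : 1 ≤ m) (hk : k < m) : c m k ≤ 2 * Real.sqrt ((k:ℝ) + 2) := by
  have h1 : c m k = Real.sqrt (c m k ^ 2) := (Real.sqrt_sq (c_nonneg hm k)).symm
  rw [h1]
  have : (2 : ℝ) * Real.sqrt ((k:ℝ) + 2) = Real.sqrt (4 * ((k:ℝ) + 2)) := by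
    rw [Real.sqrt_mul (by norm_num), show (4:ℝ) = 2^2 by norm_num, Real.sqrt_sq (by norm_num)]
  rw [this]
  exact Real.sqrt_le_sqrt (c_sq_le hm hk)

lemma rat_tendsto (p q : ℝ) :
    Tendsto (fun m : ℕ => (4 * (m:ℝ) - 1) ^ 2 / (16 * ((m:ℝ) + p) * ((m:ℝ) + q)))
      atTop (𝓝 1) := by
  have hm := tendsto_one_div_atTop_nhds_zero_nat (𝕜 := ℝ)
  have h0 : Tendsto (fun m : ℕ =>
      ((4:ℝ) - 1/(m:ℝ))^2 / ((16 + 16*p*(1/(m:ℝ))) * (1 + q * (1/(m:ℝ)))))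
      atTop (𝓝 (((4:ℝ) - 0)^2 / ((16 + 16*p*0) * (1 + q*0)))) := by
    apply Tendsto.div
    · exact (tendsto_const_nhds.sub hm).pow 2
    · exact (tendsto_const_nhds.add ((tendsto_const_nhds.mul hm))).mul
        (tendsto_const_nhds.add ((tendsto_const_nhds.mul hm)))
    · norm_num
  norm_num at h0
  apply h0.congr'
  obtain ⟨N, hN⟩ := exists_nat_gt (|p| + |q| + 1)
  filter_upwards [eventually_ge_atTop N] with m hm'
  have hmN : (|p| + |q| + 1 : ℝ) < (m:ℝ) := by
    calc (|p| + |q| + 1 : ℝ) < N := hN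
      _ ≤ (m:ℝ) := by exact_mod_cast hm'
  have h1 : (0:ℝ) < (m:ℝ) := by
    have := abs_nonneg p; have := abs_nonneg q; linarith
  have h2 : (m:ℝ) + p > 0 := by have := neg_abs_le p; linarith [abs_nonneg q]
  have h3 : (m:ℝ) + q > 0 := by have := neg_abs_le q; linarith [abs_nonneg p]
  have hB : (0:ℝ) < (16 + 16 * p * ((m:ℝ))⁻¹) * (1 + q * ((m:ℝ))⁻¹) := by
    have e2 : (16:ℝ) + 16 * p * ((m:ℝ))⁻¹ = 16 * ((m:ℝ) + p) / m := by
      field_simp [h1.ne']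
    have e3 : (1:ℝ) + q * ((m:ℝ))⁻¹ = ((m:ℝ) + q) / m := by
      field_simp [h1.ne']
    rw [e2, e3]; positivity
  have hD : (0:ℝ) < 16 * ((m:ℝ) + p) * ((m:ℝ) + q) := by positivity
  rw [div_eq_div_iff hB.ne' hD.ne']
  field_simp [h1.ne']

lemma c_tendsto (k : ℕ) : Tendsto (fun m : ℕ => c m k) atTop (𝓝 1) := by
  have hL := rat_tendsto (-((k:ℝ) + 1/2)) ((k:ℝ) + 1/2)
  have hU := rat_tendsto (-((k:ℝ) + 1)) (k:ℝ)
  have sq1 : Real.sqrt 1 = 1 := Real.sqrt_one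
  have hLs : Tendsto (fun m : ℕ => Real.sqrt
      ((4 * (m:ℝ) - 1) ^ 2 / (16 * ((m:ℝ) + -((k:ℝ) + 1/2)) * ((m:ℝ) + ((k:ℝ) + 1/2)))))
      atTop (𝓝 1) := by
    simpa [sq1] using hL.sqrt
  have hUs : Tendsto (fun m : ℕ => Real.sqrt
      ((4 * (m:ℝ) - 1) ^ 2 / (16 * ((m:ℝ) + -((k:ℝ) + 1)) * ((m:ℝ) + (k:ℝ)))))
      atTop (𝓝 1) := by
    simpa [sq1] using hU.sqrt
  apply tendsto_of_tendsto_of_tendsto_of_le_of_le' hLs hUs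
  · -- lower bound eventually
    filter_upwards [eventually_ge_atTop (k + 2)] with m hm
    have hm1 : 1 ≤ m := by omega
    have hm' : ((k:ℝ)) + 2 ≤ (m:ℝ) := by exact_mod_cast hm
    have hca : ((m - 1 - k : ℕ) : ℝ) = (m:ℝ) - 1 - (k:ℝ) := by
      have h : m - 1 - k = m - (1 + k) := by omega
      rw [h, Nat.cast_sub (by omega)]; push_cast; ring
    have hcb : ((m + k : ℕ) : ℝ) = (m:ℝ) + (k:ℝ) := by push_cast; ring
    have hga := w_sq_ge (m - 1 - k)
    have hgb := w_sq_ge (m + k)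
    rw [hca] at hga
    rw [hcb] at hgb
    have hc2 : (4 * (m:ℝ) - 1) ^ 2 / (16 * ((m:ℝ) + -((k:ℝ) + 1/2)) * ((m:ℝ) + ((k:ℝ) + 1/2)))
        ≤ c m k ^ 2 := by
      have e : c m k ^ 2 = (π * (4 * (m:ℝ) - 1) / 4) ^ 2 *
          (w (m - 1 - k) ^ 2 * w (m + k) ^ 2) := by unfold c; ring
      have h1 : 1 / (π * (((m:ℝ) - 1 - k) + 1/2)) * (1 / (π * (((m:ℝ) + k) + 1/2)))
          ≤ w (m - 1 - k) ^ 2 * w (m + k) ^ 2 := by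
        apply mul_le_mul hga hgb (by positivity) (sq_nonneg _)
      have e2 : (π * (4 * (m:ℝ) - 1) / 4) ^ 2 *
          (1 / (π * (((m:ℝ) - 1 - k) + 1/2)) * (1 / (π * (((m:ℝ) + k) + 1/2)))) =
          (4 * (m:ℝ) - 1) ^ 2 / (16 * ((m:ℝ) + -((k:ℝ) + 1/2)) * ((m:ℝ) + ((k:ℝ) + 1/2))) := by
        have hp1 : (0:ℝ) < (m:ℝ) - 1 - k + 1/2 := by linarith
        have hp2 : (0:ℝ) < (m:ℝ) + k + 1/2 := by positivity
        have h9 : (0:ℝ) < (m:ℝ) + -((k:ℝ) + 1/2) := by linarith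
        have hd : (16 * ((m:ℝ) + -((k:ℝ) + 1/2)) * ((m:ℝ) + ((k:ℝ) + 1/2))) ≠ 0 :=
          (mul_pos (mul_pos (by norm_num : (0:ℝ) < 16) h9)
            (by linarith : (0:ℝ) < (m:ℝ) + ((k:ℝ) + 1/2))).ne'
        have hne : (π * ((m:ℝ) - 1 - k + 1/2)) * (π * ((m:ℝ) + k + 1/2)) ≠ 0 :=
          (mul_pos (mul_pos pi_pos hp1) (mul_pos pi_pos hp2)).ne'
        rw [show (1 / (π * ((m:ℝ) - 1 - k + 1/2))) * (1 / (π * ((m:ℝ) + k + 1/2)))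
            = 1 / ((π * ((m:ℝ) - 1 - k + 1/2)) * (π * ((m:ℝ) + k + 1/2))) from by
          rw [div_mul_div_comm, one_mul], mul_one_div, div_eq_div_iff hne hd]
        ring
      rw [e, ← e2]
      exact mul_le_mul_of_nonneg_left h1 (by positivity)
    calc Real.sqrt ((4 * (m:ℝ) - 1) ^ 2 / (16 * ((m:ℝ) + -((k:ℝ) + 1/2)) * ((m:ℝ) + ((k:ℝ) + 1/2))))
        ≤ Real.sqrt (c m k ^ 2) := Real.sqrt_le_sqrt hc2
      _ = c m k := Real.sqrt_sq (c_nonneg hm1 k)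
  · -- upper bound eventually
    filter_upwards [eventually_ge_atTop (k + 2)] with m hm
    have hm1 : 1 ≤ m := by omega
    have hm' : ((k:ℝ)) + 2 ≤ (m:ℝ) := by exact_mod_cast hm
    have hca : ((m - 1 - k : ℕ) : ℝ) = (m:ℝ) - 1 - (k:ℝ) := by
      have h : m - 1 - k = m - (1 + k) := by omega
      rw [h, Nat.cast_sub (by omega)]; push_cast; ring
    have hcb : ((m + k : ℕ) : ℝ) = (m:ℝ) + (k:ℝ) := by push_cast; ring
    have hwa := w_sq_le (m - 1 - k) (by omega)
    have hwb := w_sq_le (m + k) (by omega)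
    rw [hca] at hwa
    rw [hcb] at hwb
    have hpa : (0:ℝ) < (m:ℝ) - 1 - (k:ℝ) := by linarith
    have hpb : (0:ℝ) < (m:ℝ) + (k:ℝ) := by positivity
    have hc2 : c m k ^ 2 ≤
        (4 * (m:ℝ) - 1) ^ 2 / (16 * ((m:ℝ) + -((k:ℝ) + 1)) * ((m:ℝ) + (k:ℝ))) := by
      have e : c m k ^ 2 = (π * (4 * (m:ℝ) - 1) / 4) ^ 2 *
          (w (m - 1 - k) ^ 2 * w (m + k) ^ 2) := by unfold c; ring
      have h1 : w (m - 1 - k) ^ 2 * w (m + k) ^ 2 ≤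
          1 / (π * ((m:ℝ) - 1 - k)) * (1 / (π * ((m:ℝ) + k))) := by
        apply mul_le_mul hwa hwb (sq_nonneg _) (by positivity)
      have e2 : (π * (4 * (m:ℝ) - 1) / 4) ^ 2 *
          (1 / (π * ((m:ℝ) - 1 - k)) * (1 / (π * ((m:ℝ) + k)))) =
          (4 * (m:ℝ) - 1) ^ 2 / (16 * ((m:ℝ) + -((k:ℝ) + 1)) * ((m:ℝ) + (k:ℝ))) := by
        have h9 : (0:ℝ) < (m:ℝ) + -((k:ℝ) + 1) := by linarith
        have hd : (16 * ((m:ℝ) + -((k:ℝ) + 1)) * ((m:ℝ) + (k:ℝ))) ≠ 0 :=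
          (mul_pos (mul_pos (by norm_num : (0:ℝ) < 16) h9) hpb).ne'
        have hne : (π * ((m:ℝ) - 1 - k)) * (π * ((m:ℝ) + k)) ≠ 0 :=
          (mul_pos (mul_pos pi_pos hpa) (mul_pos pi_pos hpb)).ne'
        rw [show (1 / (π * ((m:ℝ) - 1 - k))) * (1 / (π * ((m:ℝ) + k)))
            = 1 / ((π * ((m:ℝ) - 1 - k)) * (π * ((m:ℝ) + k))) from by
          rw [div_mul_div_comm, one_mul], mul_one_div, div_eq_div_iff hne hd]
        ring
      rw [e, ← e2]
      exact mul_le_mul_of_nonneg_left h1 (by positivity)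
    calc c m k = Real.sqrt (c m k ^ 2) := (Real.sqrt_sq (c_nonneg hm1 k)).symm
      _ ≤ _ := Real.sqrt_le_sqrt hc2

end MuAux2

namespace MuAux3
open MuAux MuAux2

lemma sArc_sq_odd (k : ℕ) (ψ : ℝ) :
    sArc (2*(k:ℤ)+1) ψ ^ 2 = 4 * (Real.sin ((2*(k:ℝ)+1) * ψ) ^ 2 / (2*(k:ℝ)+1)^2) := by
  rw [sArc, if_neg (by omega)]
  push_cast
  rw [div_pow]
  ring

lemma ptilde_odd {m k : ℕ} (hk : k < m) :
    ptildeSqZ (2*m-1) (2*(k:ℤ)+1) = (4*(m:ℝ)-1)/(4*π) * (w (m-1-k) * w (m+k)) := by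
  have hm : 1 ≤ m := by omega
  have hcastn : ((2*m-1 : ℕ) : ℤ) = 2*(m:ℤ)-1 := by omega
  rw [ptildeSqZ, if_pos (by rw [hcastn]; exact ⟨(m:ℤ)+k, by ring⟩)]
  have habs : (2*(k:ℤ)+1).natAbs = 2*k+1 := by omega
  rw [habs]
  have h1 : (2*m-1) - (2*k+1) - 1 = 2*(m-1-k) - 1 := by omega
  have h2 : (2*m-1) + (2*k+1) - 1 = 2*(m+k) - 1 := by omega
  have h3 : (2*m-1) - (2*k+1) = 2*(m-1-k) := by omega
  have h4 : (2*m-1) + (2*k+1) = 2*(m+k) := by omega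
  rw [h1, h2, h3, h4]
  have hcast : ((2*m-1 : ℕ) : ℝ) = 2*(m:ℝ)-1 := by
    rw [Nat.cast_sub (by omega)]; push_cast; ring
  rw [hcast, w, w]
  have : 2 * (2*(m:ℝ)-1) + 1 = 4*(m:ℝ)-1 := by ring
  rw [this, div_mul_div_comm, div_mul_div_comm, div_mul_div_comm]

lemma F_neg (nn : ℕ) (ψ : ℝ) (j : ℤ) :
    ptildeSqZ nn (-j) * sArc (-j) ψ ^ 2 = ptildeSqZ nn j * sArc j ψ ^ 2 := by
  have h1 : ptildeSqZ nn (-j) = ptildeSqZ nn j := by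
    rw [ptildeSqZ, ptildeSqZ]
    have he : Even ((nn:ℤ) + -j) ↔ Even ((nn:ℤ) + j) := by
      constructor
      · intro ⟨r, hr⟩; exact ⟨r + j, by omega⟩
      · intro ⟨r, hr⟩; exact ⟨r - j, by omega⟩
    rw [Int.natAbs_neg]
    by_cases h : Even ((nn:ℤ) + j)
    · rw [if_pos (he.mpr h), if_pos h]
    · rw [if_neg (fun hc => h (he.mp hc)), if_neg h]
  have h2 : sArc (-j) ψ = sArc j ψ := by
    rcases eq_or_ne j 0 with rfl | hj
    · norm_num
    · rw [sArc, sArc, if_neg hj, if_neg (neg_ne_zero.mpr hj)]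
      push_cast
      rw [neg_mul, Real.sin_neg]
      rw [div_eq_div_iff (by exact_mod_cast (neg_ne_zero.mpr (Int.cast_ne_zero.mpr hj)))
        (by exact_mod_cast (Int.cast_ne_zero.mpr hj : ((j:ℝ) ≠ 0)))]
      ring
  rw [h1, h2]

lemma sum_rewrite {m : ℕ} (hm : 1 ≤ m) (ψ : ℝ) :
    (4*(m:ℝ)-1)/4 * muSq (2*m-1) ψ =
      ∑ k ∈ range m, 16 * c m k * (Real.sin ((2*(k:ℝ)+1)*ψ)^2 / (2*(k:ℝ)+1)^2) := by
  set F : ℤ → ℝ := fun j => ptildeSqZ (2*m-1) j * sArc j ψ ^ 2 with hF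
  have hF0 : F 0 = 0 := by
    simp only [hF, ptildeSqZ]
    rw [if_neg]
    · ring
    · intro ⟨r, hr⟩
      omega
  have hsplit : Finset.Icc (-((2*m-1:ℕ):ℤ)) ((2*m-1:ℕ):ℤ) =
      Finset.Icc (-((2*m-1:ℕ):ℤ)) (-1) ∪ Finset.Icc 0 ((2*m-1:ℕ):ℤ) := by
    ext j
    simp only [Finset.mem_Icc, Finset.mem_union]
    omega
  have hdisj : Disjoint (Finset.Icc (-((2*m-1:ℕ):ℤ)) (-1)) (Finset.Icc 0 ((2*m-1:ℕ):ℤ)) := by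
    rw [Finset.disjoint_left]
    intro a ha hb
    simp only [Finset.mem_Icc] at ha hb
    omega
  have hneg : ∑ j ∈ Finset.Icc (-((2*m-1:ℕ):ℤ)) (-1), F j
      = ∑ j ∈ Finset.Icc 1 ((2*m-1:ℕ):ℤ), F j := by
    apply Finset.sum_nbij' (i := fun j => -j) (j := fun j => -j)
    · intro a ha; simp only [Finset.mem_Icc] at *; omega
    · intro a ha; simp only [Finset.mem_Icc] at *; omega
    · intro a _; ring
    · intro a _; ring
    · intro a _; exact (F_neg (2*m-1) ψ a).symm
  have hzero : ∑ j ∈ Finset.Icc (0:ℤ) ((2*m-1:ℕ):ℤ), F j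
      = ∑ j ∈ Finset.Icc 1 ((2*m-1:ℕ):ℤ), F j := by
    have : Finset.Icc (0:ℤ) ((2*m-1:ℕ):ℤ) = insert 0 (Finset.Icc 1 ((2*m-1:ℕ):ℤ)) := by
      ext j
      simp only [Finset.mem_Icc, Finset.mem_insert]
      omega
    rw [this, Finset.sum_insert (by simp)]
    rw [hF0, zero_add]
  have hfilter : ∑ j ∈ Finset.Icc (1:ℤ) ((2*m-1:ℕ):ℤ), F j =
      ∑ j ∈ (Finset.Icc (1:ℤ) ((2*m-1:ℕ):ℤ)).filter (fun j => Odd j), F j := by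
    symm
    apply Finset.sum_filter_of_ne
    intro j _ hFj
    by_contra hodd
    apply hFj
    have hev : Even j := Int.not_odd_iff_even.mp hodd
    simp only [hF, ptildeSqZ]
    rw [if_neg]
    · ring
    · obtain ⟨r, hr⟩ := hev
      intro ⟨s, hs⟩
      omega
  have himage : (Finset.Icc (1:ℤ) ((2*m-1:ℕ):ℤ)).filter (fun j => Odd j) =
      Finset.image (fun k : ℕ => 2*(k:ℤ)+1) (range m) := by
    ext j
    simp only [Finset.mem_filter, Finset.mem_Icc, Finset.mem_image, Finset.mem_range]
    constructor
    · rintro ⟨⟨h1, h2⟩, r, hr⟩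
      refine ⟨(j.toNat - 1)/2, by omega, by omega⟩
    · rintro ⟨k, hk, rfl⟩
      exact ⟨⟨by omega, by omega⟩, ⟨k, by ring⟩⟩
  have hinj : ∑ j ∈ Finset.image (fun k : ℕ => 2*(k:ℤ)+1) (range m), F j =
      ∑ k ∈ range m, F (2*(k:ℤ)+1) := by
    apply Finset.sum_image
    intro a _ b _ h
    simp only at h
    omega
  have htot : ∑ j ∈ Finset.Icc (-((2*m-1:ℕ):ℤ)) ((2*m-1:ℕ):ℤ), F j
      = 2 * ∑ k ∈ range m, F (2*(k:ℤ)+1) := by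
    rw [hsplit, Finset.sum_union hdisj, hneg, hzero, hfilter, himage, hinj]
    ring
  have hcastn : ((2*m-1 : ℕ) : ℝ) = 2*(m:ℝ)-1 := by
    rw [Nat.cast_sub (by omega)]; push_cast; ring
  rw [muSq, htot, hcastn]
  have h4m : (2 * (2*(m:ℝ)-1) + 1) = 4*(m:ℝ)-1 := by ring
  rw [h4m, Finset.mul_sum, Finset.mul_sum, Finset.mul_sum]
  apply Finset.sum_congr rfl
  intro k hk
  have hkm : k < m := Finset.mem_range.mp hk
  have hterm : F (2*(k:ℤ)+1) = (4*(m:ℝ)-1)/(4*π) * (w (m-1-k) * w (m+k)) *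
      (4 * (Real.sin ((2*(k:ℝ)+1)*ψ)^2 / (2*(k:ℝ)+1)^2)) := by
    rw [hF]
    show ptildeSqZ (2*m-1) (2*(k:ℤ)+1) * sArc (2*(k:ℤ)+1) ψ ^ 2 = _
    rw [ptilde_odd hkm, sArc_sq_odd]
  rw [hterm]
  simp only [c]
  have hne : (4*(m:ℝ)-1) ≠ 0 := by
    have : (1:ℝ) ≤ (m:ℝ) := by exact_mod_cast hm
    nlinarith
  have h2k : (2*(k:ℝ)+1) ≠ 0 := by positivity
  field_simp [hne, pi_ne_zero, h2k]
  ring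

end MuAux3

namespace MuAux4

lemma cos_sum {x : ℝ} (hx : x ∈ Set.Icc (0:ℝ) 1) :
    HasSum (fun n : ℕ => 1 / (n:ℝ)^2 * Real.cos (2*π*n*x)) (π^2*(x^2 - x + 1/6)) := by
  have h := hasSum_one_div_nat_pow_mul_cos one_ne_zero hx
  have hB : (Polynomial.map (algebraMap ℚ ℝ) (Polynomial.bernoulli (2*1))).eval x
      = x^2 - x + 1/6 := by
    norm_num
    simp [Polynomial.bernoulli, Finset.sum_range_succ, bernoulli_zero, bernoulli_one,
      bernoulli_eq_bernoulli'_of_ne_one, bernoulli'_two]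
    ring
  rw [hB] at h
  have hC : (-1:ℝ)^(1+1) * (2*π)^(2*1)/2/((Nat.factorial (2*1) : ℝ)) = π^2 := by
    norm_num [Nat.factorial]
    ring
  rw [hC] at h
  convert h using 2
  norm_num

lemma oddcos {ψ : ℝ} (h0 : 0 ≤ ψ) (hπ : ψ ≤ π) :
    HasSum (fun k : ℕ => Real.cos (2*(2*(k:ℝ)+1)*ψ) / (2*(k:ℝ)+1)^2)
      (if ψ ≤ π/2 then π^2/8 - π*ψ/2 else π*ψ/2 - 3*π^2/8) := by
  set f : ℕ → ℝ := fun n => 1/(n:ℝ)^2 * Real.cos (2*(n:ℝ)*ψ) with hf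
  have hx : ψ/π ∈ Set.Icc (0:ℝ) 1 := ⟨by positivity, by rw [div_le_one pi_pos]; exact hπ⟩
  have hfull : HasSum f (π^2*((ψ/π)^2 - ψ/π + 1/6)) := by
    have h := cos_sum hx
    have e : (fun n : ℕ => 1/(n:ℝ)^2 * Real.cos (2*π*n*(ψ/π))) = f := by
      funext n
      rw [hf]
      congr 2
      field_simp
    rwa [e] at h
  have hsq : Summable (fun n : ℕ => 1/((n:ℝ)+1)^2) := by
    have h := Real.summable_one_div_nat_pow.mpr (by norm_num : 2 ≤ 2)
    have h2 := (summable_nat_add_iff 1).mpr h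
    apply h2.congr
    intro n
    push_cast
    ring
  have hso : Summable (fun n : ℕ => f (2*n+1)) := by
    apply Summable.of_norm_bounded hsq
    intro n
    rw [hf]
    show ‖1/((2*n+1:ℕ):ℝ)^2 * Real.cos (2*((2*n+1:ℕ):ℝ)*ψ)‖ ≤ 1/((n:ℝ)+1)^2
    rw [Real.norm_eq_abs, abs_mul]
    have h1 : |1/((2*n+1:ℕ):ℝ)^2| = 1/((2*n+1:ℕ):ℝ)^2 := abs_of_nonneg (by positivity)
    calc |1/((2*n+1:ℕ):ℝ)^2| * |Real.cos (2*((2*n+1:ℕ):ℝ)*ψ)|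
        ≤ |1/((2*n+1:ℕ):ℝ)^2| * 1 :=
          mul_le_mul_of_nonneg_left (Real.abs_cos_le_one _) (abs_nonneg _)
      _ ≤ 1/((n:ℝ)+1)^2 := by
          rw [mul_one, h1]
          apply div_le_div_of_nonneg_left (by norm_num) (by positivity)
          have : ((n:ℝ)+1)^2 ≤ ((2*n+1:ℕ):ℝ)^2 := by
            push_cast
            nlinarith [Nat.cast_nonneg (α := ℝ) n]
          linarith
  obtain ⟨O, hO⟩ := hso
  have hfun : (fun k : ℕ => Real.cos (2*(2*(k:ℝ)+1)*ψ) / (2*(k:ℝ)+1)^2)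
      = (fun n : ℕ => f (2*n+1)) := by
    funext n
    rw [hf]
    push_cast
    rw [one_div, inv_mul_eq_div]
  by_cases hc : ψ ≤ π/2
  · rw [if_pos hc]
    have hy : 2*ψ/π ∈ Set.Icc (0:ℝ) 1 := by
      constructor
      · positivity
      · rw [div_le_one pi_pos]; linarith
    have heven : HasSum (fun n : ℕ => f (2*n)) ((1/4) * (π^2*((2*ψ/π)^2 - 2*ψ/π + 1/6))) := by
      have h2 := (cos_sum hy).mul_left (1/4)
      have e : (fun n : ℕ => (1/4) * (1/(n:ℝ)^2 * Real.cos (2*π*n*(2*ψ/π)))) =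
          (fun n : ℕ => f (2*n)) := by
        funext n
        rw [hf]
        have harg : 2*π*(n:ℝ)*(2*ψ/π) = 2*((2*n:ℕ):ℝ)*ψ := by
          push_cast
          field_simp
        rw [harg, ← mul_assoc, div_mul_div_comm, one_mul]
        congr 1
        push_cast
        ring
      rwa [e] at h2
    have hEO := heven.even_add_odd hO
    have hval := hfull.unique hEO
    have hOval : O = π^2/8 - π*ψ/2 := by
      have h1 : O = π^2*((ψ/π)^2 - ψ/π + 1/6) - (1/4) * (π^2*((2*ψ/π)^2 - 2*ψ/π + 1/6)) := by
        linarith [hval]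
      rw [h1]
      field_simp
      ring
    rw [hfun]
    exact hOval ▸ hO
  · rw [if_neg hc]
    have hy : (2*ψ-π)/π ∈ Set.Icc (0:ℝ) 1 := by
      constructor
      · apply div_nonneg _ pi_pos.le
        linarith [not_le.mp hc]
      · rw [div_le_one pi_pos]; linarith
    have heven : HasSum (fun n : ℕ => f (2*n))
        ((1/4) * (π^2*(((2*ψ-π)/π)^2 - (2*ψ-π)/π + 1/6))) := by
      have h2 := (cos_sum hy).mul_left (1/4)
      have e : (fun n : ℕ => (1/4) * (1/(n:ℝ)^2 * Real.cos (2*π*n*((2*ψ-π)/π)))) =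
          (fun n : ℕ => f (2*n)) := by
        funext n
        rw [hf]
        have harg : 2*π*(n:ℝ)*((2*ψ-π)/π) = 2*((2*n:ℕ):ℝ)*ψ - (n:ℤ)*(2*π) := by
          push_cast
          field_simp
        rw [harg, Real.cos_sub_int_mul_two_pi, ← mul_assoc, div_mul_div_comm, one_mul]
        congr 1
        push_cast
        ring
      rwa [e] at h2
    have hEO := heven.even_add_odd hO
    have hval := hfull.unique hEO
    have hOval : O = π*ψ/2 - 3*π^2/8 := by
      have h1 : O = π^2*((ψ/π)^2 - ψ/π + 1/6)
          - (1/4) * (π^2*(((2*ψ-π)/π)^2 - (2*ψ-π)/π + 1/6)) := by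
        linarith [hval]
      rw [h1]
      field_simp
      ring
    rw [hfun]
    exact hOval ▸ hO

lemma hasSum_invsq : HasSum (fun k : ℕ => (1:ℝ)/(2*(k:ℝ)+1)^2) (π^2/8) := by
  have h := oddcos (le_refl 0) pi_pos.le
  rw [if_pos (by positivity : (0:ℝ) ≤ π/2)] at h
  have e : (fun k : ℕ => Real.cos (2*(2*(k:ℝ)+1)*0) / (2*(k:ℝ)+1)^2)
      = (fun k : ℕ => (1:ℝ)/(2*(k:ℝ)+1)^2) := by
    funext k
    rw [mul_zero, Real.cos_zero]
  rw [e] at h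
  simpa using h

lemma hasSum_T {ψ : ℝ} (h0 : 0 ≤ ψ) (hπ : ψ ≤ π) :
    HasSum (fun k : ℕ => 16 * (Real.sin ((2*(k:ℝ)+1)*ψ)^2 / (2*(k:ℝ)+1)^2))
      (if ψ ≤ π/2 then 4*π*ψ else 4*π^2 - 4*π*ψ) := by
  have h8 := hasSum_invsq.mul_left 8
  have hcos := (oddcos h0 hπ).mul_left 8
  have hsub := h8.sub hcos
  have e : (fun k : ℕ => 8 * ((1:ℝ)/(2*(k:ℝ)+1)^2) - 8 * (Real.cos (2*(2*(k:ℝ)+1)*ψ) / (2*(k:ℝ)+1)^2))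
      = (fun k : ℕ => 16 * (Real.sin ((2*(k:ℝ)+1)*ψ)^2 / (2*(k:ℝ)+1)^2)) := by
    funext k
    have hs : Real.sin ((2*(k:ℝ)+1)*ψ)^2 = 1/2 - Real.cos (2*((2*(k:ℝ)+1)*ψ))/2 :=
      Real.sin_sq_eq_half_sub _
    have harg : 2*((2*(k:ℝ)+1)*ψ) = 2*(2*(k:ℝ)+1)*ψ := by ring
    rw [hs, harg]
    field_simp
    ring
  rw [e] at hsub
  by_cases hc : ψ ≤ π/2
  · rw [if_pos hc] at hsub ⊢
    have : 8 * (π^2/8) - 8 * (π^2/8 - π*ψ/2) = 4*π*ψ := by ring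
    rwa [this] at hsub
  · rw [if_neg hc] at hsub ⊢
    have : 8 * (π^2/8) - 8 * (π*ψ/2 - 3*π^2/8) = 4*π^2 - 4*π*ψ := by ring
    rwa [this] at hsub

end MuAux4

namespace MuAux5
open MuAux MuAux2 MuAux3 MuAux4

noncomputable def Fm (m k : ℕ) : ℝ :=
  if k < m then 16 * |c m k - 1| / (2*(k:ℝ)+1)^2 else 0

noncomputable def bnd (k : ℕ) : ℝ := 16 * (2 * Real.sqrt ((k:ℝ)+2) + 1) / (2*(k:ℝ)+1)^2

lemma A_eq (m : ℕ) :
    ∑ k ∈ range m, 16 * |c m k - 1| / (2*(k:ℝ)+1)^2 = ∑' k, Fm m k := by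
  rw [tsum_eq_sum (s := range m) (fun k hk => by rw [Fm, if_neg (by simpa using hk)])]
  apply Finset.sum_congr rfl
  intro k hk
  rw [Fm, if_pos (Finset.mem_range.mp hk)]

lemma rpow_help (k : ℕ) :
    Real.sqrt ((k:ℝ)+1) / ((k:ℝ)+1)^2 = 1 / ((k:ℝ)+1)^((3:ℝ)/2) := by
  have hpos : (0:ℝ) < (k:ℝ)+1 := by positivity
  rw [div_eq_div_iff (by positivity) (by positivity), Real.sqrt_eq_rpow,
    ← Real.rpow_add hpos, one_mul]
  norm_num

lemma bnd_summable : Summable bnd := by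
  have hs : Summable (fun k : ℕ => (1:ℝ)/((k:ℝ)+1)^((3:ℝ)/2)) := by
    have h := Real.summable_one_div_nat_rpow.mpr (by norm_num : (1:ℝ) < 3/2)
    have h2 := (summable_nat_add_iff 1).mpr h
    apply h2.congr
    intro n
    push_cast
    norm_num
  apply Summable.of_nonneg_of_le _ _ (hs.mul_left (48 * Real.sqrt 2))
  · intro k
    rw [bnd]
    positivity
  · intro k
    rw [bnd]
    have h1 : Real.sqrt ((k:ℝ)+2) ≤ Real.sqrt 2 * Real.sqrt ((k:ℝ)+1) := by
      rw [← Real.sqrt_mul (by norm_num)]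
      apply Real.sqrt_le_sqrt
      have : (0:ℝ) ≤ (k:ℝ) := by positivity
      linarith
    have h2 : (2 * Real.sqrt ((k:ℝ)+2) + 1) ≤ 3 * (Real.sqrt 2 * Real.sqrt ((k:ℝ)+1)) := by
      have hge : (1:ℝ) ≤ Real.sqrt ((k:ℝ)+2) := by
        rw [show (1:ℝ) = Real.sqrt 1 from Real.sqrt_one.symm]
        apply Real.sqrt_le_sqrt
        have : (0:ℝ) ≤ (k:ℝ) := by positivity
        linarith
      have hge2 : (1:ℝ) ≤ Real.sqrt 2 * Real.sqrt ((k:ℝ)+1) := le_trans hge h1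
      linarith [h1]
    have h3 : ((k:ℝ)+1)^2 ≤ (2*(k:ℝ)+1)^2 := by
      have : (0:ℝ) ≤ (k:ℝ) := by positivity
      nlinarith
    calc 16 * (2 * Real.sqrt ((k:ℝ)+2) + 1) / (2*(k:ℝ)+1)^2
        ≤ 16 * (3 * (Real.sqrt 2 * Real.sqrt ((k:ℝ)+1))) / ((k:ℝ)+1)^2 := by
          apply div_le_div₀ (by positivity) (by linarith) (by positivity) h3
      _ = 48 * Real.sqrt 2 * (Real.sqrt ((k:ℝ)+1) / ((k:ℝ)+1)^2) := by ring
      _ = 48 * Real.sqrt 2 * (1/((k:ℝ)+1)^((3:ℝ)/2)) := by rw [rpow_help]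

lemma A_tendsto : Tendsto (fun m => ∑' k, Fm m k) atTop (𝓝 0) := by
  have h := tendsto_tsum_of_dominated_convergence (𝓕 := atTop) (f := Fm)
    (g := fun _ => 0) (bound := bnd) bnd_summable ?_ ?_
  · simpa using h
  · intro k
    have h1 : Tendsto (fun m => c m k - 1) atTop (𝓝 0) := by
      simpa using (c_tendsto k).sub_const 1
    have h2 : Tendsto (fun m => 16 * |c m k - 1| / (2*(k:ℝ)+1)^2) atTop (𝓝 0) := by
      have h3 := (h1.abs.const_mul 16).div_const ((2*(k:ℝ)+1)^2)
      simpa using h3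
    apply h2.congr'
    filter_upwards [eventually_ge_atTop (k+1)] with m hm
    rw [Fm, if_pos (by omega)]
  · filter_upwards [] with m
    intro k
    rw [Fm, bnd]
    by_cases hk : k < m
    · rw [if_pos hk]
      have hm : 1 ≤ m := by omega
      have hc0 := c_nonneg hm k
      have hcu := c_le hm hk
      rw [Real.norm_eq_abs, abs_of_nonneg (by positivity)]
      apply div_le_div_of_nonneg_right ?_ (by positivity)
      have : |c m k - 1| ≤ c m k + 1 := by
        rw [abs_sub_comm]
        calc |1 - c m k| ≤ |1| + |c m k| := abs_sub _ _
          _ = 1 + c m k := by rw [abs_one, abs_of_nonneg hc0]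
          _ = c m k + 1 := by ring
      nlinarith [this, hcu]
    · rw [if_neg hk]
      simp only [norm_zero]
      positivity

lemma u_summable : Summable (fun k : ℕ => 16/(2*(k:ℝ)+1)^2) := by
  have h := hasSum_invsq.summable.mul_left 16
  apply h.congr
  intro k
  rw [mul_one_div]

lemma tau_tendsto :
    Tendsto (fun m : ℕ => ∑' k : ℕ, 16/(2*(((k+m : ℕ)):ℝ)+1)^2) atTop (𝓝 0) :=
  tendsto_sum_nat_add (fun k => 16/(2*(k:ℝ)+1)^2)

lemma key {m : ℕ} (hm : 1 ≤ m) {ψ : ℝ} (h0 : 0 ≤ ψ) (hπ : ψ ≤ π) :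
    |(if ψ ≤ π/2 then 4*π*ψ else 4*π^2 - 4*π*ψ) - (4*(m:ℝ)-1)/4 * muSq (2*m-1) ψ| ≤
      (∑' k, Fm m k) + ∑' k : ℕ, 16/(2*(((k+m : ℕ)):ℝ)+1)^2 := by
  set h : ℕ → ℝ := fun k => 16 * (Real.sin ((2*(k:ℝ)+1)*ψ)^2 / (2*(k:ℝ)+1)^2) with hh
  have hT := hasSum_T h0 hπ
  have hsum : Summable h := hT.summable
  have htail : (if ψ ≤ π/2 then 4*π*ψ else 4*π^2 - 4*π*ψ) - ∑ k ∈ range m, h k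
      = ∑' k, h (k + m) := by
    have := Summable.sum_add_tsum_nat_add m hsum
    rw [hT.tsum_eq] at this
    linarith
  have htail_bound : |∑' k, h (k + m)| ≤ ∑' k : ℕ, 16/(2*(((k+m : ℕ)):ℝ)+1)^2 := by
    have hs1 : Summable (fun k => h (k + m)) := (summable_nat_add_iff m).mpr hsum
    have hs2 : Summable (fun k : ℕ => 16/(2*(((k+m : ℕ)):ℝ)+1)^2) := by
      have := (summable_nat_add_iff m).mpr u_summable
      apply this.congr
      intro k
      push_cast
      ring_nf
    rw [abs_of_nonneg (tsum_nonneg (fun k => by rw [hh]; positivity))]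
    apply Summable.tsum_le_tsum _ hs1 hs2
    intro k
    show 16 * (Real.sin ((2*(((k+m:ℕ)):ℝ)+1)*ψ)^2 / (2*(((k+m:ℕ)):ℝ)+1)^2)
      ≤ 16/(2*(((k+m:ℕ)):ℝ)+1)^2
    have hcast : ((k + m : ℕ):ℝ) = (k:ℝ) + m := by push_cast; ring
    rw [hcast]
    have hq : Real.sin ((2*((k:ℝ)+m)+1)*ψ)^2 / (2*((k:ℝ)+m)+1)^2 ≤ 1/(2*((k:ℝ)+m)+1)^2 := by
      apply div_le_div_of_nonneg_right ?_ (by positivity)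
      · have := Real.abs_sin_le_one ((2*((k:ℝ)+m)+1)*ψ)
        nlinarith [this, abs_nonneg (Real.sin ((2*((k:ℝ)+m)+1)*ψ)), sq_abs (Real.sin ((2*((k:ℝ)+m)+1)*ψ))]
    calc 16 * (Real.sin ((2*((k:ℝ)+m)+1)*ψ)^2 / (2*((k:ℝ)+m)+1)^2)
        ≤ 16 * (1/(2*((k:ℝ)+m)+1)^2) := by linarith
      _ = 16/(2*((k:ℝ)+m)+1)^2 := by rw [mul_one_div]
  have hmain : |∑ k ∈ range m, h k - (4*(m:ℝ)-1)/4 * muSq (2*m-1) ψ| ≤ ∑' k, Fm m k := by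
    rw [sum_rewrite hm ψ, ← A_eq m, ← Finset.sum_sub_distrib]
    calc |∑ k ∈ range m, (h k - 16 * c m k * (Real.sin ((2*(k:ℝ)+1)*ψ)^2 / (2*(k:ℝ)+1)^2))|
        ≤ ∑ k ∈ range m, |h k - 16 * c m k * (Real.sin ((2*(k:ℝ)+1)*ψ)^2 / (2*(k:ℝ)+1)^2)| :=
          Finset.abs_sum_le_sum_abs _ _
      _ ≤ ∑ k ∈ range m, 16 * |c m k - 1| / (2*(k:ℝ)+1)^2 := by
          apply Finset.sum_le_sum
          intro k _
          rw [hh]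
          have he : 16 * (Real.sin ((2*(k:ℝ)+1)*ψ)^2 / (2*(k:ℝ)+1)^2)
              - 16 * c m k * (Real.sin ((2*(k:ℝ)+1)*ψ)^2 / (2*(k:ℝ)+1)^2)
              = (1 - c m k) * (16 * (Real.sin ((2*(k:ℝ)+1)*ψ)^2 / (2*(k:ℝ)+1)^2)) := by ring
          rw [he, abs_mul]
          have hq : |16 * (Real.sin ((2*(k:ℝ)+1)*ψ)^2 / (2*(k:ℝ)+1)^2)| ≤ 16 / (2*(k:ℝ)+1)^2 := by
            rw [abs_of_nonneg (by positivity)]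
            rw [mul_div_assoc'] 
            apply div_le_div_of_nonneg_right ?_ (by positivity)
            nlinarith [Real.abs_sin_le_one ((2*(k:ℝ)+1)*ψ), abs_nonneg (Real.sin ((2*(k:ℝ)+1)*ψ)),
              sq_abs (Real.sin ((2*(k:ℝ)+1)*ψ))]
          calc |1 - c m k| * |16 * (Real.sin ((2*(k:ℝ)+1)*ψ)^2 / (2*(k:ℝ)+1)^2)|
              ≤ |1 - c m k| * (16 / (2*(k:ℝ)+1)^2) :=
                mul_le_mul_of_nonneg_left hq (abs_nonneg _)
            _ = 16 * |c m k - 1| / (2*(k:ℝ)+1)^2 := by rw [abs_sub_comm]; ring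
  calc |(if ψ ≤ π/2 then 4*π*ψ else 4*π^2 - 4*π*ψ) - (4*(m:ℝ)-1)/4 * muSq (2*m-1) ψ|
      = |(∑' k, h (k + m)) + (∑ k ∈ range m, h k - (4*(m:ℝ)-1)/4 * muSq (2*m-1) ψ)| := by
        rw [← htail]; congr 1; ring
    _ ≤ |∑' k, h (k + m)| + |∑ k ∈ range m, h k - (4*(m:ℝ)-1)/4 * muSq (2*m-1) ψ| := abs_add_le _ _
    _ ≤ (∑' k : ℕ, 16/(2*(((k+m : ℕ)):ℝ)+1)^2) + ∑' k, Fm m k := add_le_add htail_bound hmain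
    _ = (∑' k, Fm m k) + ∑' k : ℕ, 16/(2*(((k+m : ℕ)):ℝ)+1)^2 := by ring

end MuAux5

theorem muSq_odd_limit :
    TendstoUniformlyOn
      (fun (m : ℕ) (ψ : ℝ) => (4 * (m : ℝ) - 1) / 4 * muSq (2 * m - 1) ψ)
      (fun ψ : ℝ =>
        if ψ ≤ Real.pi / 2 then 4 * Real.pi * ψ else 4 * Real.pi ^ 2 - 4 * Real.pi * ψ)
      atTop (Set.Icc 0 Real.pi) := by
  rw [Metric.tendstoUniformlyOn_iff]
  intro ε hε
  have hAT := MuAux5.A_tendsto.add MuAux5.tau_tendsto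
  rw [add_zero] at hAT
  filter_upwards [hAT.eventually_lt_const hε, eventually_ge_atTop 1] with m hlt hm1
  intro ψ hψ
  rw [Real.dist_eq]
  calc |(if ψ ≤ π/2 then 4*π*ψ else 4*π^2 - 4*π*ψ) - (4*(m:ℝ)-1)/4 * muSq (2*m-1) ψ|
      ≤ (∑' k, MuAux5.Fm m k) + ∑' k : ℕ, 16/(2*(((k+m : ℕ)):ℝ)+1)^2 :=
        MuAux5.key hm1 hψ.1 hψ.2
    _ < ε := hlt
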